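/- Suppose the welfares of two single tests on disjoint pools A (with aggregate utility u_A, healthy probability q_A), B (u_B, q_B), and a common pool C (u_C, q_C) are considered with budget B=2. For the overlapping regime T* = (A∪C, B∪C), the welfare is q_C(q_A u_A + q_B u_B + (q_A + (1−q_A)q_B) u_C). For each of the four non-overlapping alternatives T^1=(A∪C, B), T^2=(A, C), T^3=(B, C), T^4=(A∪B, C), the ratio u(T*)/u(T^k) is a non-decreasing function of q_C on [0,1]; hence the worst-case ratio is attained at q_C = 1. -/

import Mathlib

open Finset

/-- Probability of a health realization `ω` (true = healthy) under independent
healthy-probabilities `q`. -/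
noncomputable def healthProb {n : ℕ} (q : Fin n → ℝ) (ω : Fin n → Bool) : ℝ :=
  ∏ i, if ω i then q i else 1 - q i

/-- Probability that individual `i` lies in at least one negative test of the regime `T`. -/
noncomputable def inNegProb {n B : ℕ} (q : Fin n → ℝ) (T : Fin B → Finset (Fin n))
    (i : Fin n) : ℝ :=
  ∑ ω : Fin n → Bool,
    if ∃ j, i ∈ T j ∧ ∀ k ∈ T j, ω k = true then healthProb q ω else 0

/-- Expected welfare of a (possibly overlapping) testing regime `T`. -/
noncomputable def welfare {n B : ℕ} (q u : Fin n → ℝ) (T : Fin B → Finset (Fin n)) : ℝ :=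
  ∑ i, u i * inNegProb q T i

/-- Stand-alone expected welfare of a single pooled test `t`. -/
noncomputable def testWelfare {n : ℕ} (q u : Fin n → ℝ) (t : Finset (Fin n)) : ℝ :=
  (∏ i ∈ t, q i) * ∑ i ∈ t, u i

/-- Welfare of a non-overlapping testing regime, as a sum of stand-alone test welfares. -/
noncomputable def noWelfare {n B : ℕ} (q u : Fin n → ℝ) (T : Fin B → Finset (Fin n)) : ℝ :=
  ∑ j, testWelfare q u (T j)

/-- Probability that test `T j` is pivotal for individual `i`: `i ∈ T j`, test `T j` is
negative, and every earlier test containing `i` is positive. -/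
noncomputable def pivotalProb {n B : ℕ} (q : Fin n → ℝ) (T : Fin B → Finset (Fin n))
    (i : Fin n) (j : Fin B) : ℝ :=
  ∑ ω : Fin n → Bool,
    if i ∈ T j ∧ (∀ k ∈ T j, ω k = true) ∧
        (∀ j' : Fin B, j' < j → i ∈ T j' → ∃ k ∈ T j', ω k = false)
      then healthProb q ω else 0


/-- Part 1: for disjoint pools `A`, `B`, `C`, the welfare of the overlapping regime
`(A ∪ C, B ∪ C)` equals `q_C (q_A u_A + q_B u_B + (q_A + (1 - q_A) q_B) u_C)`.
Part 2: for each of the four non-overlapping alternatives, the ratio of the overlapping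
welfare to the alternative welfare is a non-decreasing function of `q_C` on `[0,1]`,
so the worst-case ratio is attained at `q_C = 1`. -/
lemma allProb_eq {n} (q : Fin n → ℝ) (S : Finset (Fin n)) :
    (∑ ω : Fin n → Bool, if (∀ k ∈ S, ω k = true) then healthProb q ω else 0)
      = ∏ i ∈ S, q i := by
  set g : Fin n → Bool → ℝ := fun i b =>
    if i ∈ S then (if b then q i else 0) else (if b then q i else 1 - q i) with hg
  have h : ∀ ω : Fin n → Bool, (if (∀ k ∈ S, ω k = true) then healthProb q ω else 0)
      = ∏ i, g i (ω i) := by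
    intro ω
    by_cases h : ∀ k ∈ S, ω k = true
    · rw [if_pos h]
      unfold healthProb
      apply Finset.prod_congr rfl
      intro i _
      by_cases hi : i ∈ S
      · simp [hg, hi, h i hi]
      · simp [hg, hi]
    · rw [if_neg h]
      push_neg at h
      obtain ⟨k, hk, hkf⟩ := h
      have hkfalse : ω k = false := by simpa using hkf
      symm
      apply Finset.prod_eq_zero (Finset.mem_univ k)
      simp [hg, hk, hkfalse]
  rw [Finset.sum_congr rfl fun ω _ => h ω]
  rw [← Fintype.piFinset_univ, ← Finset.prod_univ_sum]
  have : ∀ i : Fin n, (∑ b : Bool, g i b) = if i ∈ S then q i else 1 := by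
    intro i
    by_cases hi : i ∈ S <;> simp [hg, hi] <;> ring
  rw [Finset.prod_congr rfl fun i _ => this i, Finset.prod_ite_mem, Finset.univ_inter]

lemma unionProb_eq {n} (q : Fin n → ℝ) (S₁ S₂ : Finset (Fin n)) :
    (∑ ω : Fin n → Bool, if (∀ k ∈ S₁, ω k = true) ∨ (∀ k ∈ S₂, ω k = true)
        then healthProb q ω else 0)
      = ∏ i ∈ S₁, q i + ∏ i ∈ S₂, q i - ∏ i ∈ S₁ ∪ S₂, q i := by
  have h : ∀ ω : Fin n → Bool,
      (if (∀ k ∈ S₁, ω k = true) ∨ (∀ k ∈ S₂, ω k = true) then healthProb q ω else 0)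
      = (if (∀ k ∈ S₁, ω k = true) then healthProb q ω else 0)
        + (if (∀ k ∈ S₂, ω k = true) then healthProb q ω else 0)
        - (if (∀ k ∈ S₁ ∪ S₂, ω k = true) then healthProb q ω else 0) := by
    intro ω
    have hiff : (∀ k ∈ S₁ ∪ S₂, ω k = true) ↔
        (∀ k ∈ S₁, ω k = true) ∧ (∀ k ∈ S₂, ω k = true) := by
      simp [Finset.mem_union, or_imp, forall_and]
    rw [if_congr hiff rfl rfl]
    by_cases h1 : ∀ k ∈ S₁, ω k = true <;> by_cases h2 : ∀ k ∈ S₂, ω k = true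
    · rw [if_pos (Or.inl h1), if_pos h1, if_pos h2, if_pos ⟨h1, h2⟩]; ring
    · rw [if_pos (Or.inl h1), if_pos h1, if_neg h2, if_neg (fun h => h2 h.2)]; ring
    · rw [if_pos (Or.inr h2), if_neg h1, if_pos h2, if_neg (fun h => h1 h.1)]; ring
    · rw [if_neg (fun h => h.elim h1 h2), if_neg h1, if_neg h2, if_neg (fun h => h1 h.1)]; ring
  rw [Finset.sum_congr rfl fun ω _ => h ω, Finset.sum_sub_distrib, Finset.sum_add_distrib,
    allProb_eq, allProb_eq, allProb_eq]

lemma ratio_mono (K a b c c' : ℝ) (hK : 0 ≤ K) (ha : 0 ≤ a) (hb : 0 ≤ b)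
    (hc : 0 ≤ c) (hcc : c ≤ c') :
    c * K / (a + b * c) ≤ c' * K / (a + b * c') := by
  have hc' : 0 ≤ c' := le_trans hc hcc
  rcases eq_or_lt_of_le (by positivity : (0:ℝ) ≤ a + b * c') with h2 | h2
  · -- a + b*c' = 0
    have ha0 : a = 0 := by nlinarith [mul_nonneg hb hc']
    have hbc' : b * c' = 0 := by nlinarith
    have hbc : b * c = 0 := by
      rcases mul_eq_zero.mp hbc' with hb0 | hc0
      · simp [hb0]
      · have : c = 0 := le_antisymm (hc0 ▸ hcc) hc
        simp [this]
    rw [ha0, hbc, hbc']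
    simp
  · rcases eq_or_lt_of_le (by positivity : (0:ℝ) ≤ a + b * c) with h1 | h1
    · rw [← h1]
      simp only [div_zero]
      positivity
    · rw [div_le_div_iff₀ h1 h2]
      nlinarith [mul_nonneg (mul_nonneg hK ha) hc, mul_nonneg (mul_nonneg hK ha) hc',
        mul_nonneg hK ha, mul_nonneg (mul_nonneg (mul_nonneg hK hb) hc) hc']


theorem stmt11 :
    (∀ (n : ℕ) (q u : Fin n → ℝ), (∀ i, 0 ≤ q i ∧ q i ≤ 1) → (∀ i, 0 ≤ u i) →
      ∀ A B C : Finset (Fin n), Disjoint A B → Disjoint A C → Disjoint B C →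
        welfare q u ![A ∪ C, B ∪ C] =
          (∏ i ∈ C, q i) *
            ((∏ i ∈ A, q i) * (∑ i ∈ A, u i) + (∏ i ∈ B, q i) * (∑ i ∈ B, u i) +
              ((∏ i ∈ A, q i) + (1 - ∏ i ∈ A, q i) * ∏ i ∈ B, q i) * ∑ i ∈ C, u i)) ∧
    (∀ qA qB uA uB uC : ℝ,
      0 ≤ qA → qA ≤ 1 → 0 ≤ qB → qB ≤ 1 → 0 ≤ uA → 0 ≤ uB → 0 ≤ uC →
      ∀ c c' : ℝ, 0 ≤ c → c ≤ c' → c' ≤ 1 →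
        ((c * (qA * uA + qB * uB + (qA + (1 - qA) * qB) * uC)) /
            (c * qA * uA + qB * uB + c * qA * uC) ≤
          (c' * (qA * uA + qB * uB + (qA + (1 - qA) * qB) * uC)) /
            (c' * qA * uA + qB * uB + c' * qA * uC)) ∧
        ((c * (qA * uA + qB * uB + (qA + (1 - qA) * qB) * uC)) /
            (qA * uA + c * uC) ≤
          (c' * (qA * uA + qB * uB + (qA + (1 - qA) * qB) * uC)) /
            (qA * uA + c' * uC)) ∧
        ((c * (qA * uA + qB * uB + (qA + (1 - qA) * qB) * uC)) /
            (qB * uB + c * uC) ≤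
          (c' * (qA * uA + qB * uB + (qA + (1 - qA) * qB) * uC)) /
            (qB * uB + c' * uC)) ∧
        ((c * (qA * uA + qB * uB + (qA + (1 - qA) * qB) * uC)) /
            (qA * qB * (uA + uB) + c * uC) ≤
          (c' * (qA * uA + qB * uB + (qA + (1 - qA) * qB) * uC)) /
            (qA * qB * (uA + uB) + c' * uC))) := by
  constructor
  · intro n q u hq hu A B C hAB hAC hBC
    set qA := ∏ i ∈ A, q i
    set qB := ∏ i ∈ B, q i
    set qC := ∏ i ∈ C, q i
    have hexists : ∀ (i : Fin n) (ω : Fin n → Bool),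
        (∃ j : Fin 2, i ∈ ![A ∪ C, B ∪ C] j ∧ ∀ k ∈ ![A ∪ C, B ∪ C] j, ω k = true) ↔
        ((i ∈ A ∪ C ∧ ∀ k ∈ A ∪ C, ω k = true) ∨ (i ∈ B ∪ C ∧ ∀ k ∈ B ∪ C, ω k = true)) := by
      intro i ω
      rw [Fin.exists_fin_two]
      simp
    have key : ∀ i : Fin n, u i * inNegProb q ![A ∪ C, B ∪ C] i =
        (if i ∈ A then u i * (qA * qC) else 0) + (if i ∈ B then u i * (qB * qC) else 0)
        + (if i ∈ C then u i * (qC * (qA + (1 - qA) * qB)) else 0) := by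
      intro i
      unfold inNegProb
      rw [Finset.sum_congr rfl fun ω _ => if_congr (hexists i ω) rfl rfl]
      by_cases hiC : i ∈ C
      · have hiA : i ∉ A := fun h => (hAC.forall_ne_finset h hiC) rfl
        have hiB : i ∉ B := fun h => (hBC.forall_ne_finset h hiC) rfl
        have h1 : i ∈ A ∪ C := Finset.mem_union_right _ hiC
        have h2 : i ∈ B ∪ C := Finset.mem_union_right _ hiC
        rw [Finset.sum_congr rfl fun ω _ => if_congr
          (by simp [h1, h2] : _ ↔ ((∀ k ∈ A ∪ C, ω k = true) ∨ (∀ k ∈ B ∪ C, ω k = true))) rfl rfl]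
        rw [unionProb_eq]
        have hu1 : (A ∪ C) ∪ (B ∪ C) = (A ∪ B) ∪ C := by
          ext x; simp [Finset.mem_union]; tauto
        have hd : Disjoint (A ∪ B) C := Finset.disjoint_union_left.mpr ⟨hAC, hBC⟩
        rw [hu1, Finset.prod_union hd, Finset.prod_union hAB, Finset.prod_union hAC,
          Finset.prod_union hBC]
        rw [if_neg hiA, if_neg hiB, if_pos hiC]
        ring
      · by_cases hiA : i ∈ A
        · have hiB : i ∉ B := fun h => (hAB.forall_ne_finset hiA h) rfl
          have h1 : i ∈ A ∪ C := Finset.mem_union_left _ hiA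
          have h2 : i ∉ B ∪ C := by simp [hiB, hiC]
          rw [Finset.sum_congr rfl fun ω _ => if_congr
            (by simp [h1, h2] : _ ↔ (∀ k ∈ A ∪ C, ω k = true)) rfl rfl]
          rw [allProb_eq, Finset.prod_union hAC, if_pos hiA, if_neg hiB, if_neg hiC]
          ring
        · by_cases hiB : i ∈ B
          · have h1 : i ∉ A ∪ C := by simp [hiA, hiC]
            have h2 : i ∈ B ∪ C := Finset.mem_union_left _ hiB
            rw [Finset.sum_congr rfl fun ω _ => if_congr
              (by simp [h1, h2] : _ ↔ (∀ k ∈ B ∪ C, ω k = true)) rfl rfl]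
            rw [allProb_eq, Finset.prod_union hBC, if_neg hiA, if_pos hiB, if_neg hiC]
            ring
          · have h1 : i ∉ A ∪ C := by simp [hiA, hiC]
            have h2 : i ∉ B ∪ C := by simp [hiB, hiC]
            rw [Finset.sum_congr rfl fun ω _ => if_congr
              (by simp [h1, h2] : _ ↔ False) rfl rfl]
            simp [hiA, hiB, hiC]
    unfold welfare
    rw [Finset.sum_congr rfl fun i _ => key i]
    rw [Finset.sum_add_distrib, Finset.sum_add_distrib, Finset.sum_ite_mem,
      Finset.sum_ite_mem, Finset.sum_ite_mem, Finset.univ_inter, Finset.univ_inter,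
      Finset.univ_inter, ← Finset.sum_mul, ← Finset.sum_mul, ← Finset.sum_mul]
    ring
  · intro qA qB uA uB uC hqA hqA1 hqB hqB1 huA huB huC c c' hc hcc' hc'1
    have hK : 0 ≤ qA * uA + qB * uB + (qA + (1 - qA) * qB) * uC := by
      nlinarith [mul_nonneg hqA huA, mul_nonneg hqB huB, mul_nonneg hqA huC,
        mul_nonneg (mul_nonneg (by linarith : (0:ℝ) ≤ 1 - qA) hqB) huC]
    refine ⟨?_, ?_, ?_, ?_⟩
    · have e : ∀ x : ℝ, x * (qA * uA + qB * uB + (qA + (1 - qA) * qB) * uC) /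
          (x * qA * uA + qB * uB + x * qA * uC)
          = x * (qA * uA + qB * uB + (qA + (1 - qA) * qB) * uC) /
            (qB * uB + (qA * uA + qA * uC) * x) := by
        intro x; ring_nf
      rw [e c, e c']
      exact ratio_mono _ _ _ _ _ hK (by positivity) (by positivity) hc hcc'
    · have e : ∀ x : ℝ, x * (qA * uA + qB * uB + (qA + (1 - qA) * qB) * uC) /
          (qA * uA + x * uC)
          = x * (qA * uA + qB * uB + (qA + (1 - qA) * qB) * uC) /
            (qA * uA + uC * x) := by
        intro x; ring_nf
      rw [e c, e c']
      exact ratio_mono _ _ _ _ _ hK (by positivity) huC hc hcc'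
    · have e : ∀ x : ℝ, x * (qA * uA + qB * uB + (qA + (1 - qA) * qB) * uC) /
          (qB * uB + x * uC)
          = x * (qA * uA + qB * uB + (qA + (1 - qA) * qB) * uC) /
            (qB * uB + uC * x) := by
        intro x; ring_nf
      rw [e c, e c']
      exact ratio_mono _ _ _ _ _ hK (by positivity) huC hc hcc'
    · have e : ∀ x : ℝ, x * (qA * uA + qB * uB + (qA + (1 - qA) * qB) * uC) /
          (qA * qB * (uA + uB) + x * uC)
          = x * (qA * uA + qB * uB + (qA + (1 - qA) * qB) * uC) /
            (qA * qB * (uA + uB) + uC * x) := by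
        intro x; ring_nf
      rw [e c, e c']
      exact ratio_mono _ _ _ _ _ hK (by positivity) huC hc hcc'
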